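/- Let a < b be real numbers and define P(z) = (i/π)(log(z−a) − log(z−b)) for z in the upper half-plane ℍ, using principal branch logarithms. Then P maps ℍ one-to-one onto the vertical strip S = {z : 0 < Re z < 1}. -/

import Mathlib

open Set Complex

private lemma arg_lt_arg_aux {u v : ℂ} (him : 0 < u.im) (he : u.im = v.im)
    (hre : v.re < u.re) : u.arg < v.arg := by
  have hvim : 0 < v.im := he ▸ him
  have hu0 : u ≠ 0 := fun h => by simp [h] at him
  have hv0 : v ≠ 0 := fun h => by simp [h] at hvim
  have hmu : u.arg ∈ Set.Icc 0 Real.pi := ⟨Complex.arg_nonneg_iff.2 him.le, Complex.arg_le_pi u⟩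
  have hmv : v.arg ∈ Set.Icc 0 Real.pi := ⟨Complex.arg_nonneg_iff.2 hvim.le, Complex.arg_le_pi v⟩
  have hcos : Real.cos v.arg < Real.cos u.arg := by
    rw [Complex.cos_arg hu0, Complex.cos_arg hv0]
    have hsu : 0 < ‖u‖ := norm_pos_iff.mpr hu0
    have hsv : 0 < ‖v‖ := norm_pos_iff.mpr hv0
    rw [div_lt_div_iff₀ hsv hsu]
    have hsu2 : (‖u‖)^2 = u.re^2 + u.im^2 := by
      rw [Complex.sq_norm, Complex.normSq_apply]; ring
    have hsv2 : (‖v‖)^2 = v.re^2 + v.im^2 := by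
      rw [Complex.sq_norm, Complex.normSq_apply]; ring
    rcases le_or_gt 0 v.re with hv | hv
    · have hur : 0 < u.re := lt_of_le_of_lt hv hre
      have hd : 0 < u.re^2 - v.re^2 := by nlinarith
      have hsq : (v.re * ‖u‖)^2 < (u.re * ‖v‖)^2 := by
        have e1 : (v.re * ‖u‖)^2 = v.re^2*u.re^2 + v.re^2*u.im^2 := by
          rw [mul_pow, hsu2]; ring
        have e2 : (u.re * ‖v‖)^2 = u.re^2*v.re^2 + u.re^2*v.im^2 := by
          rw [mul_pow, hsv2]; ring
        rw [e1, e2, ← he]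
        nlinarith [mul_pos (mul_pos him him) hd]
      nlinarith [mul_pos hur hsv, mul_nonneg hv hsu.le]
    · rcases le_or_gt 0 u.re with hu | hu
      · have h1 : v.re * ‖u‖ < 0 := mul_neg_of_neg_of_pos hv hsu
        have h2 : 0 ≤ u.re * ‖v‖ := mul_nonneg hu hsv.le
        linarith
      · have hd : 0 < v.re^2 - u.re^2 := by nlinarith
        have hsq : (u.re * ‖v‖)^2 < (v.re * ‖u‖)^2 := by
          have e1 : (v.re * ‖u‖)^2 = v.re^2*u.re^2 + v.re^2*u.im^2 := by
            rw [mul_pow, hsu2]; ring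
          have e2 : (u.re * ‖v‖)^2 = u.re^2*v.re^2 + u.re^2*v.im^2 := by
            rw [mul_pow, hsv2]; ring
          rw [e1, e2, ← he]
          nlinarith [mul_pos (mul_pos him him) hd]
        have h1 : v.re * ‖u‖ < 0 := mul_neg_of_neg_of_pos hv hsu
        have h2 : u.re * ‖v‖ < 0 := mul_neg_of_neg_of_pos hu hsv
        nlinarith
  by_contra h
  push_neg at h
  rcases eq_or_lt_of_le h with h' | h'
  · rw [h'] at hcos; exact lt_irrefl _ hcos
  · exact absurd (Real.strictAntiOn_cos hmv hmu h') (not_lt.2 hcos.le)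

private lemma arg_pos_of_im_pos {z : ℂ} (hz : 0 < z.im) : 0 < z.arg := by
  rcases eq_or_lt_of_le (Complex.arg_nonneg_iff.2 hz.le) with h | h
  · exfalso
    have := (Complex.arg_eq_zero_iff).1 h.symm
    linarith [this.2]
  · exact h

private lemma im_log_diff_mem (a b : ℝ) (hab : a < b) (z : ℂ) (hz : 0 < z.im) :
    -Real.pi < (Complex.log (z - a) - Complex.log (z - b)).im ∧
      (Complex.log (z - a) - Complex.log (z - b)).im < 0 := by
  have hima : (z - (a:ℂ)).im = z.im := by simp
  have himb : (z - (b:ℂ)).im = z.im := by simp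
  have hza : z - (a:ℂ) ≠ 0 := fun h => by
    rw [h] at hima; simp at hima; linarith
  have hzb : z - (b:ℂ) ≠ 0 := fun h => by
    rw [h] at himb; simp at himb; linarith
  have hlt : (z - (a:ℂ)).arg < (z - (b:ℂ)).arg := by
    apply arg_lt_arg_aux (by rw [hima]; exact hz) (by rw [hima, himb])
    simp only [Complex.sub_re, Complex.ofReal_re]
    linarith
  have hpa : 0 < (z - (a:ℂ)).arg := arg_pos_of_im_pos (by rw [hima]; exact hz)
  have hpb : (z - (b:ℂ)).arg < Real.pi :=
    lt_of_le_of_ne (Complex.arg_le_pi _)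
      (fun h => by
        have := Complex.arg_eq_pi_iff.1 h
        rw [himb] at this; linarith [this.2])
  rw [Complex.sub_im, Complex.log_im, Complex.log_im]
  constructor <;> linarith

private lemma re_I_div_pi_mul (w : ℂ) :
    ((Complex.I / (Real.pi : ℂ)) * w).re = -w.im / Real.pi := by
  simp [Complex.div_re, Complex.mul_re, Complex.mul_im, Complex.normSq]
  ring

theorem log_diff_maps_halfplane_onto_strip (a b : ℝ) (hab : a < b) :
    Set.BijOn (fun z : ℂ => (Complex.I / (Real.pi : ℂ)) *
        (Complex.log (z - a) - Complex.log (z - b)))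
      {z : ℂ | 0 < z.im} {w : ℂ | 0 < w.re ∧ w.re < 1} := by
  have hπ : (0:ℝ) < Real.pi := Real.pi_pos
  have hπC : (Real.pi : ℂ) ≠ 0 := by exact_mod_cast hπ.ne'
  have hIπ : Complex.I / (Real.pi : ℂ) ≠ 0 :=
    div_ne_zero Complex.I_ne_zero hπC
  have habC : ((a:ℂ)) - b ≠ 0 := by
    rw [sub_ne_zero]; exact_mod_cast hab.ne
  -- nonvanishing of z - t for z ∈ ℍ
  have hne : ∀ (t : ℝ) (z : ℂ), 0 < z.im → z - (t:ℂ) ≠ 0 := by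
    intro t z hz h
    have : (z - (t:ℂ)).im = 0 := by rw [h]; simp
    simp at this; linarith
  -- exponential identity
  have hexp : ∀ z : ℂ, 0 < z.im →
      Complex.exp (Complex.log (z - a) - Complex.log (z - b)) = (z - a) / (z - b) := by
    intro z hz
    rw [Complex.exp_sub, Complex.exp_log (hne a z hz), Complex.exp_log (hne b z hz)]
  refine ⟨?_, ?_, ?_⟩
  · -- MapsTo
    intro z hz
    simp only [Set.mem_setOf_eq] at hz ⊢
    obtain ⟨h1, h2⟩ := im_log_diff_mem a b hab z hz
    rw [re_I_div_pi_mul]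
    constructor
    · apply div_pos (by linarith) hπ
    · rw [div_lt_one hπ]; linarith
  · -- InjOn
    intro z1 hz1 z2 hz2 h
    simp only [Set.mem_setOf_eq] at hz1 hz2
    simp only at h
    have hlog := mul_left_cancel₀ hIπ h
    have hr : (z1 - a) / (z1 - b) = (z2 - a) / (z2 - b) := by
      rw [← hexp z1 hz1, ← hexp z2 hz2, hlog]
    rw [div_eq_div_iff (hne b z1 hz1) (hne b z2 hz2)] at hr
    have key : ((a:ℂ) - b) * (z1 - z2) = 0 := by linear_combination hr
    rcases mul_eq_zero.1 key with h' | h'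
    · exact absurd h' habC
    · exact sub_eq_zero.1 h'
  · -- SurjOn
    intro w hw
    simp only [Set.mem_setOf_eq] at hw
    obtain ⟨hw0, hw1⟩ := hw
    set v : ℂ := -(Real.pi : ℂ) * Complex.I * w with hv
    set q : ℂ := Complex.exp v with hq
    have hvre : v.re = Real.pi * w.im := by
      simp [hv, Complex.mul_re, Complex.mul_im]
    have hvim : v.im = -(Real.pi * w.re) := by
      simp [hv, Complex.mul_re, Complex.mul_im]
    have hsin : 0 < Real.sin (Real.pi * w.re) := by
      apply Real.sin_pos_of_pos_of_lt_pi
      · positivity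
      · nlinarith
    have hqim : q.im < 0 := by
      rw [hq, Complex.exp_im, hvre, hvim, Real.sin_neg]
      have := Real.exp_pos (Real.pi * w.im)
      nlinarith
    have h1q : (1:ℂ) - q ≠ 0 := by
      intro h
      have : q = 1 := by linear_combination -h
      rw [this] at hqim; simp at hqim
    -- candidate preimage
    set z : ℂ := ((a:ℂ) - b * q) / (1 - q) with hzdef
    have hns : 0 < Complex.normSq (1 - q) := Complex.normSq_pos.2 h1q
    have hzim : z.im = ((a - b) * q.im) / Complex.normSq (1 - q) := by
      rw [hzdef, Complex.div_im]
      simp only [Complex.sub_im, Complex.sub_re, Complex.mul_im, Complex.mul_re,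
        Complex.ofReal_re, Complex.ofReal_im, Complex.one_re, Complex.one_im]
      field_simp
      ring
    have hz : 0 < z.im := by
      rw [hzim]
      apply div_pos _ hns
      have : a - b < 0 := by linarith
      exact mul_pos_of_neg_of_neg this hqim
    refine ⟨z, hz, ?_⟩
    -- ratio identity
    have hza' : z - (a:ℂ) = ((a:ℂ) - b) * q / (1 - q) := by
      rw [hzdef]; field_simp; ring
    have hzb' : z - (b:ℂ) = ((a:ℂ) - b) / (1 - q) := by
      rw [hzdef]; field_simp; ring
    have hratio : (z - a) / (z - b) = q := by
      rw [hza', hzb']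
      field_simp
    -- log identity
    have hexpeq : Complex.exp (Complex.log (z - a) - Complex.log (z - b)) = Complex.exp v := by
      rw [hexp z hz, hratio, hq]
    obtain ⟨n, hn⟩ := Complex.exp_eq_exp_iff_exists_int.1 hexpeq
    have him1 := im_log_diff_mem a b hab z hz
    have hnim : (Complex.log (z - a) - Complex.log (z - b)).im
        = v.im + (n:ℝ) * (2 * Real.pi) := by
      rw [hn]
      simp [Complex.add_im, Complex.mul_im, Complex.mul_re]
    have hn0 : n = 0 := by
      have hvim2 : -Real.pi < v.im ∧ v.im < 0 := by
        rw [hvim]; constructor <;> nlinarith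
      have h1 : (n:ℝ) < 1 := by nlinarith [him1.1, him1.2, hvim2.1, hvim2.2, hnim]
      have h2 : (-1:ℝ) < (n:ℝ) := by nlinarith [him1.1, him1.2, hvim2.1, hvim2.2, hnim]
      have h1' : n < 1 := by exact_mod_cast h1
      have h2' : -1 < n := by exact_mod_cast h2
      omega
    rw [hn0] at hn
    simp only [Int.cast_zero, zero_mul, add_zero] at hn
    simp only
    rw [hn, hv]
    field_simp
    linear_combination (-w) * Complex.I_sq
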